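/- arXiv:2501.11027 — 8 statements merged into one kernel-verified Lean document; each statement's English description precedes it below -/
import Mathlib

section
/- Let λ ∈ 𝔻 with λ ≠ 0, and let ω, ζ ∈ 𝔻 with ζ ≠ ω be such that B_λ(ζ) = B_λ(ω). Then the degree-two Blaschke product B_{ω,ζ}(z) = ((z−ζ)/(1−conj(ζ)·z))·((z−ω)/(1−conj(ω)·z)) satisfies B_{ω,ζ}(0) = B_{ω,ζ}(λ); explicitly, ζ·ω = ((λ−ζ)/(1−conj(ζ)·λ))·((λ−ω)/(1−conj(ω)·λ)). -/
open Complex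

lemma one_sub_ne (x : ℂ) (hx : ‖x‖ < 1) : 1 - x ≠ 0 := by
  intro h
  rw [sub_eq_zero] at h
  rw [← h] at hx
  simp at hx

/-- The degree-two Blaschke product `B_λ(z) = z (z - λ) / (1 - conj(λ) z)`. -/
noncomputable def Blam (lam z : ℂ) : ℂ := z * (z - lam) / (1 - (starRingEnd ℂ) lam * z)

/-- if `ζ ≠ ω` in the disc satisfy `B_λ(ζ) = B_λ(ω)`, then the degree-two Blaschke
product with zeroes `ζ, ω` takes the same value at `0` and at `λ`; explicitly
`ζ·ω = ((λ−ζ)/(1−conj(ζ)λ))·((λ−ω)/(1−conj(ω)λ))`. -/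
theorem stmt1 (lam : ℂ) (hlam : ‖lam‖ < 1) (hlam0 : lam ≠ 0)
    (ω ζ : ℂ) (hω : ‖ω‖ < 1) (hζ : ‖ζ‖ < 1) (hne : ζ ≠ ω)
    (heq : Blam lam ζ = Blam lam ω) :
    ζ * ω = ((lam - ζ) / (1 - (starRingEnd ℂ) ζ * lam)) *
        ((lam - ω) / (1 - (starRingEnd ℂ) ω * lam)) := by
  have h1 : 1 - (starRingEnd ℂ) lam * ζ ≠ 0 := by
    apply one_sub_ne
    rw [norm_mul, Complex.norm_conj]
    exact mul_lt_one_of_nonneg_of_lt_one_left (norm_nonneg _) hlam hζ.le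
  have h2 : 1 - (starRingEnd ℂ) lam * ω ≠ 0 := by
    apply one_sub_ne
    rw [norm_mul, Complex.norm_conj]
    exact mul_lt_one_of_nonneg_of_lt_one_left (norm_nonneg _) hlam hω.le
  have h3 : 1 - (starRingEnd ℂ) ζ * lam ≠ 0 := by
    apply one_sub_ne
    rw [norm_mul, Complex.norm_conj]
    exact mul_lt_one_of_nonneg_of_lt_one_left (norm_nonneg _) hζ hlam.le
  have h4 : 1 - (starRingEnd ℂ) ω * lam ≠ 0 := by
    apply one_sub_ne
    rw [norm_mul, Complex.norm_conj]
    exact mul_lt_one_of_nonneg_of_lt_one_left (norm_nonneg _) hω hlam.le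
  unfold Blam at heq
  rw [div_eq_div_iff h1 h2] at heq
  have hd : ζ - ω ≠ 0 := sub_ne_zero.mpr hne
  have hs : ζ + ω = lam + (starRingEnd ℂ) lam * (ζ * ω) := by
    apply mul_left_cancel₀ hd
    ring_nf
    linear_combination heq
  have hs' : (starRingEnd ℂ) ζ + (starRingEnd ℂ) ω =
      (starRingEnd ℂ) lam + lam * ((starRingEnd ℂ) ζ * (starRingEnd ℂ) ω) := by
    have := congrArg (starRingEnd ℂ) hs
    simpa using this
  rw [div_mul_div_comm, eq_div_iff (mul_ne_zero h3 h4)]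
  linear_combination lam * hs - lam * ζ * ω * hs'
end

section
/- Let λ ∈ 𝔻 with λ ≠ 0 and let ω ∈ 𝔻 be such that the complex derivative of the function z ↦ B_λ(z) = z·(z−λ)/(1−conj(λ)·z) vanishes at ω. Then the squared Blaschke factor B_ω²(z) = ((z−ω)/(1−conj(ω)·z))² satisfies B_ω²(0) = B_ω²(λ); explicitly, ω² = ((λ−ω)/(1−conj(ω)·λ))². -/
open Complex

/-- if the complex derivative of `B_λ` vanishes at `ω ∈ 𝔻`, then the squared
Blaschke factor at `ω` takes the same value at `0` and `λ`:
`ω² = ((λ−ω)/(1−conj(ω)λ))²`. -/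
theorem stmt2 (lam : ℂ) (hlam : ‖lam‖ < 1) (hlam0 : lam ≠ 0)
    (ω : ℂ) (hω : ‖ω‖ < 1)
    (hderiv : deriv (Blam lam) ω = 0) :
    ω ^ 2 = ((lam - ω) / (1 - (starRingEnd ℂ) ω * lam)) ^ 2 := by
  set c : ℂ := (starRingEnd ℂ) lam with hc
  set d : ℂ := (starRingEnd ℂ) ω with hd
  have habsc : ‖c‖ = ‖lam‖ := by simp [hc]
  have habsd : ‖d‖ = ‖ω‖ := by simp [hd]
  have hne1 : (1 : ℂ) - c * ω ≠ 0 := by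
    intro h
    have : ‖c * ω‖ < 1 := by
      rw [norm_mul, habsc]
      calc ‖lam‖ * ‖ω‖ ≤ 1 * ‖ω‖ := by
            exact mul_le_mul_of_nonneg_right hlam.le (norm_nonneg _)
        _ = ‖ω‖ := by ring
        _ < 1 := hω
    have h1 : c * ω = 1 := by linear_combination -h
    simp [h1] at this
  have hne2 : (1 : ℂ) - d * lam ≠ 0 := by
    intro h
    have : ‖d * lam‖ < 1 := by
      rw [norm_mul, habsd]
      calc ‖ω‖ * ‖lam‖ ≤ 1 * ‖lam‖ := by
            exact mul_le_mul_of_nonneg_right hω.le (norm_nonneg _)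
        _ = ‖lam‖ := by ring
        _ < 1 := hlam
    have h1 : d * lam = 1 := by linear_combination -h
    simp [h1] at this
  have hne3 : (1 : ℂ) - d * ω ≠ 0 := by
    intro h
    have : ‖d * ω‖ < 1 := by
      rw [norm_mul, habsd]
      calc ‖ω‖ * ‖ω‖ ≤ 1 * ‖ω‖ := by
            exact mul_le_mul_of_nonneg_right hω.le (norm_nonneg _)
        _ = ‖ω‖ := by ring
        _ < 1 := hω
    have h1 : d * ω = 1 := by linear_combination -h
    simp [h1] at this
  -- compute the derivative
  have hg : HasDerivAt (fun z : ℂ => z * (z - lam)) (1 * (ω - lam) + ω * 1) ω :=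
    (hasDerivAt_id ω).mul ((hasDerivAt_id ω).sub_const lam)
  have hh : HasDerivAt (fun z : ℂ => 1 - c * z) (0 - c * 1) ω := by
    have := (hasDerivAt_const ω (1 : ℂ)).sub ((hasDerivAt_id ω).const_mul c)
    exact this
  have hdiv : HasDerivAt (Blam lam)
      (((1 * (ω - lam) + ω * 1) * (1 - c * ω) - ω * (ω - lam) * (0 - c * 1)) /
        (1 - c * ω) ^ 2) ω := hg.div hh hne1
  have h0 : ((1 * (ω - lam) + ω * 1) * (1 - c * ω) - ω * (ω - lam) * (0 - c * 1)) /
      (1 - c * ω) ^ 2 = 0 := by rw [← hdiv.deriv, hderiv]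
  have hE1 : c * ω ^ 2 - 2 * ω + lam = 0 := by
    have h1 : ((1 * (ω - lam) + ω * 1) * (1 - c * ω) - ω * (ω - lam) * (0 - c * 1)) = 0 := by
      rw [div_eq_zero_iff] at h0
      exact h0.resolve_right (pow_ne_zero 2 hne1)
    linear_combination -h1
  -- conjugate equation
  have hE2 : lam * d ^ 2 - 2 * d + c = 0 := by
    have := congrArg (starRingEnd ℂ) hE1
    simp only [map_add, map_sub, map_mul, map_pow, map_ofNat, map_zero] at this
    rw [← hc, ← hd] at this
    simp only [hc, hd, RingHom.id_apply, starRingEnd_self_apply] at this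
    linear_combination this
  have ht : (lam - 2 * ω + lam * d * ω) * (1 - d * ω) = 0 := by
    linear_combination hE1 - ω ^ 2 * hE2
  have ht0 : lam - 2 * ω + lam * d * ω = 0 := by
    rcases mul_eq_zero.mp ht with h | h
    · exact h
    · exact absurd h hne3
  have hkey : ω * (1 - d * lam) = lam - ω := by linear_combination -ht0
  rw [div_pow, eq_div_iff (pow_ne_zero 2 hne2)]
  linear_combination (ω * (1 - d * lam) + (lam - ω)) * hkey
end

section
/- Let λ ∈ ℝ with 0 < |λ| < 1, let z₁, z₂ ∈ (ℝ ∩ 𝔻) \ {0, λ}, and let ω ∈ 𝔻 (a complex number) satisfy B_{z₁,z₂,ω}(0) = B_{z₁,z₂,ω}(λ). Then ω is real. -/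
open Complex

/-- The degree-three Blaschke product with zeroes `a, b, c`. -/
noncomputable def B3 (a b c z : ℂ) : ℂ :=
  ((z - a) / (1 - (starRingEnd ℂ) a * z)) * ((z - b) / (1 - (starRingEnd ℂ) b * z)) *
    ((z - c) / (1 - (starRingEnd ℂ) c * z))

/-- for real `λ` and real interpolation nodes `z₁, z₂`, any `ω ∈ 𝔻` such that
`B_{z₁,z₂,ω}` satisfies the node constraint `f(0) = f(λ)` is necessarily real. -/
theorem stmt5 (lam : ℝ) (hlam0 : 0 < |lam|) (hlam1 : |lam| < 1)
    (z₁ z₂ : ℝ) (h₁ : |z₁| < 1) (h₂ : |z₂| < 1)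
    (h₁0 : z₁ ≠ 0) (h₂0 : z₂ ≠ 0) (h₁l : z₁ ≠ lam) (h₂l : z₂ ≠ lam)
    (ω : ℂ) (hω : ‖ω‖ < 1)
    (hnode : B3 (z₁ : ℂ) (z₂ : ℂ) ω 0 = B3 (z₁ : ℂ) (z₂ : ℂ) ω (lam : ℂ)) :
    ω.im = 0 := by
  have hlam : lam ≠ 0 := abs_pos.mp hlam0
  have hd1 : (1 : ℂ) - (z₁:ℂ) * lam ≠ 0 := by
    intro h
    have h' : (z₁:ℂ) * lam = 1 := by linear_combination -h
    have : ‖(z₁:ℂ) * lam‖ = 1 := by simp [h']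
    rw [norm_mul, Complex.norm_real, Complex.norm_real, Real.norm_eq_abs, Real.norm_eq_abs] at this
    nlinarith [abs_nonneg z₁, abs_nonneg lam]
  have hd2 : (1 : ℂ) - (z₂:ℂ) * lam ≠ 0 := by
    intro h
    have h' : (z₂:ℂ) * lam = 1 := by linear_combination -h
    have : ‖(z₂:ℂ) * lam‖ = 1 := by simp [h']
    rw [norm_mul, Complex.norm_real, Complex.norm_real, Real.norm_eq_abs, Real.norm_eq_abs] at this
    nlinarith [abs_nonneg z₂, abs_nonneg lam]
  have hdω : (1 : ℂ) - (starRingEnd ℂ) ω * lam ≠ 0 := by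
    intro h
    have h' : (starRingEnd ℂ) ω * (lam:ℂ) = 1 := by linear_combination -h
    have : ‖(starRingEnd ℂ) ω * (lam:ℂ)‖ = 1 := by simp [h']
    rw [norm_mul, Complex.norm_real, Real.norm_eq_abs, Complex.norm_conj] at this
    nlinarith [norm_nonneg ω, abs_nonneg lam]
  -- real denominators nonzero
  have hD1 : (1 : ℝ) - z₁ * lam ≠ 0 := by
    intro h; apply hd1; push_cast; exact_mod_cast congrArg (Complex.ofReal) h
  have hD2 : (1 : ℝ) - z₂ * lam ≠ 0 := by
    intro h; apply hd2; push_cast; exact_mod_cast congrArg (Complex.ofReal) h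
  set K : ℝ := z₁ * z₂ * ((1 - z₁*lam) * (1 - z₂*lam)) with hKdef
  set r : ℝ := (lam - z₁) * (lam - z₂) with hrdef
  have hK0 : K ≠ 0 := by
    apply mul_ne_zero (mul_ne_zero h₁0 h₂0) (mul_ne_zero hD1 hD2)
  have key : -(K:ℂ) * ω * (1 - (starRingEnd ℂ) ω * lam) = (r:ℂ) * ((lam:ℂ) - ω) := by
    unfold B3 at hnode
    simp only [Complex.conj_ofReal] at hnode
    field_simp at hnode
    rw [hKdef, hrdef]
    push_cast
    linear_combination hnode
  have hnsq : ω.re^2 + ω.im^2 < 1 := by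
    have h1 := Complex.sq_norm ω
    rw [Complex.normSq_apply] at h1
    nlinarith [norm_nonneg ω]
  obtain ⟨x, y⟩ := ω
  simp only [Complex.ext_iff, Complex.mul_re, Complex.mul_im, Complex.sub_re, Complex.sub_im,
    Complex.ofReal_re, Complex.ofReal_im, Complex.one_re, Complex.one_im,
    Complex.neg_re, Complex.neg_im, Complex.conj_re, Complex.conj_im] at key
  obtain ⟨hre, him⟩ := key
  show y = 0
  by_contra hy
  have hKr : K = r := by
    have h2 : -K * y = -r * y := by nlinarith [him]
    have := mul_right_cancel₀ hy h2
    linarith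
  -- real part gives x^2+y^2 = 1
  have hr0 : r ≠ 0 := hKr ▸ hK0
  rw [hKr] at hre
  have h3 : r * (lam * (x^2+y^2)) = r * lam := by linear_combination hre
  have h4 := mul_left_cancel₀ hr0 h3
  have h5 : lam * (x^2+y^2) = lam * 1 := by linarith
  have h6 := mul_left_cancel₀ hlam h5
  have hnsq' : x^2 + y^2 < 1 := hnsq
  linarith
end

section
/- Let z₁, …, z_n ∈ 𝔻 be pairwise distinct and let w₁, …, w_n ∈ 𝔻 be pairwise distinct. Then the n × n matrix with (i, j)-entry 1/(1 − z_i·conj(w_j)) is invertible (its determinant is nonzero). -/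
open Complex Matrix Polynomial Finset

/-- for pairwise distinct `z₁,…,z_n ∈ 𝔻` and pairwise distinct `w₁,…,w_n ∈ 𝔻`,
the Cauchy-type matrix `[1/(1 − z_i conj(w_j))]` is invertible. -/
theorem stmt7 (n : ℕ) (z w : Fin n → ℂ)
    (hz : ∀ i, ‖z i‖ < 1) (hw : ∀ i, ‖w i‖ < 1)
    (hzinj : Function.Injective z) (hwinj : Function.Injective w) :
    (Matrix.of fun i j : Fin n => 1 / (1 - z i * (starRingEnd ℂ) (w j))).det ≠ 0 := by
  classical
  intro hdet
  set v : Fin n → ℂ := fun j => (starRingEnd ℂ) (w j) with hvdef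
  have hvinj : Function.Injective v := fun a b h => hwinj ((starRingEnd ℂ).injective h)
  have hden : ∀ i j, (1 : ℂ) - z i * v j ≠ 0 := by
    intro i j h
    have h1 : z i * v j = 1 := by linear_combination -h
    have h2 : ‖z i‖ * ‖v j‖ = 1 := by
      rw [← norm_mul, h1, norm_one]
    have h3 : ‖v j‖ < 1 := by
      simpa [hvdef] using hw j
    nlinarith [norm_nonneg (z i),
      norm_nonneg (v j), hz i]
  obtain ⟨c, hc, hmv⟩ := Matrix.exists_mulVec_eq_zero_iff.mpr hdet
  rcases Nat.eq_zero_or_pos n with hn | hn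
  · subst hn; exact hc (Subsingleton.elim c 0)
  set P : ℂ[X] := ∑ j : Fin n, Polynomial.C (c j) *
      ∏ k ∈ Finset.univ.erase j, (1 - Polynomial.C (v k) * Polynomial.X) with hPdef
  have hevalP : ∀ x : ℂ, P.eval x =
      ∑ j : Fin n, c j * ∏ k ∈ Finset.univ.erase j, (1 - v k * x) := by
    intro x
    simp [hPdef, Polynomial.eval_finset_sum, Polynomial.eval_prod]
  have heval : ∀ i, P.eval (z i) = 0 := by
    intro i
    have h0 : ∑ j : Fin n, 1 / (1 - z i * v j) * c j = 0 := by
      have := congrFun hmv i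
      simpa [Matrix.mulVec, dotProduct] using this
    rw [hevalP]
    have hterm : ∀ j : Fin n, c j * ∏ k ∈ Finset.univ.erase j, (1 - v k * z i)
        = (1 / (1 - z i * v j) * c j) * ∏ k : Fin n, (1 - v k * z i) := by
      intro j
      rw [← Finset.mul_prod_erase Finset.univ (fun k => 1 - v k * z i) (Finset.mem_univ j)]
      have := hden i j
      field_simp
      ring
      exact congrArg _ (Finset.prod_congr rfl fun k _ => by ring)
    calc ∑ j : Fin n, c j * ∏ k ∈ Finset.univ.erase j, (1 - v k * z i)
        = ∑ j : Fin n, (1 / (1 - z i * v j) * c j) * ∏ k : Fin n, (1 - v k * z i) := by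
          exact Finset.sum_congr rfl fun j _ => hterm j
      _ = (∑ j : Fin n, 1 / (1 - z i * v j) * c j) * ∏ k : Fin n, (1 - v k * z i) := by
          rw [Finset.sum_mul]
      _ = 0 := by rw [h0, zero_mul]
  have hdeg : P.natDegree < Fintype.card (Fin n) := by
    rw [Fintype.card_fin]
    have h1 : P.natDegree ≤ n - 1 := by
      apply Polynomial.natDegree_sum_le_of_forall_le
      intro j _
      calc (Polynomial.C (c j) * ∏ k ∈ Finset.univ.erase j,
            (1 - Polynomial.C (v k) * Polynomial.X)).natDegree
          ≤ (Polynomial.C (c j)).natDegree + (∏ k ∈ Finset.univ.erase j,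
            (1 - Polynomial.C (v k) * Polynomial.X)).natDegree := Polynomial.natDegree_mul_le
        _ ≤ 0 + ∑ k ∈ Finset.univ.erase j,
            (1 - Polynomial.C (v k) * Polynomial.X).natDegree := by
            gcongr
            · exact le_of_eq (Polynomial.natDegree_C _)
            · exact Polynomial.natDegree_prod_le _ _
        _ ≤ ∑ k ∈ Finset.univ.erase j, 1 := by
            rw [zero_add]
            apply Finset.sum_le_sum
            intro k _
            calc (1 - Polynomial.C (v k) * Polynomial.X).natDegree
                ≤ max (1 : ℂ[X]).natDegree ((Polynomial.C (v k) * Polynomial.X)).natDegree :=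
                  Polynomial.natDegree_sub_le _ _
              _ ≤ 1 := by
                  simp only [Polynomial.natDegree_one, max_le_iff]
                  refine ⟨Nat.zero_le _, ?_⟩
                  calc (Polynomial.C (v k) * Polynomial.X).natDegree
                      ≤ (Polynomial.C (v k)).natDegree + Polynomial.X.natDegree :=
                        Polynomial.natDegree_mul_le
                    _ ≤ 1 := by simp [Polynomial.natDegree_X]
        _ = n - 1 := by
            rw [Finset.sum_const, smul_eq_mul, mul_one, Finset.card_erase_of_mem (Finset.mem_univ j),
              Finset.card_univ, Fintype.card_fin]
    omega
  have hP0 : P = 0 :=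
    Polynomial.eq_zero_of_natDegree_lt_card_of_eval_eq_zero P hzinj heval hdeg
  have hc0 : ∀ j, v j ≠ 0 → c j = 0 := by
    intro j hvj
    have he : P.eval ((v j)⁻¹) = 0 := by rw [hP0, Polynomial.eval_zero]
    rw [hevalP] at he
    rw [Finset.sum_eq_single j] at he
    · have hprod : ∏ k ∈ Finset.univ.erase j, (1 - v k * (v j)⁻¹) ≠ 0 := by
        apply Finset.prod_ne_zero_iff.mpr
        intro k hk h
        have : v k = v j := by
          field_simp at h
          linear_combination -h
        exact (Finset.mem_erase.mp hk).1 (hvinj this)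
      exact (mul_eq_zero.mp he).resolve_right hprod
    · intro k _ hkj
      apply mul_eq_zero_of_right
      apply Finset.prod_eq_zero (Finset.mem_erase.mpr ⟨Ne.symm hkj, Finset.mem_univ j⟩)
      field_simp
      simp
    · intro h; exact absurd (Finset.mem_univ j) h
  have hcall : ∀ j, c j = 0 := by
    intro j
    by_cases hvj : v j = 0
    · have he : P.eval 0 = 0 := by rw [hP0, Polynomial.eval_zero]
      rw [hevalP] at he
      simp only [mul_zero, sub_zero, Finset.prod_const_one, mul_one] at he
      rw [Finset.sum_eq_single j] at he
      · exact he
      · intro k _ hkj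
        apply hc0 k
        intro h
        exact hkj (hvinj (h.trans hvj.symm))
      · intro h; exact absurd (Finset.mem_univ j) h
    · exact hc0 j hvj
  exact hc (funext hcall)
end

section
/- Let λ ∈ 𝔻 with λ ≠ 0, let z₁, …, z_n ∈ 𝔻 \ {0, λ} be pairwise distinct, let m ≥ 1, and let α, β ∈ M_m(ℂ) be arbitrary. Then the (n·m) × (n·m) block matrix whose (i, j)-block (1 ≤ i, j ≤ n) is the m × m matrix (α + f_λ(z_i)·β)·(α + f_λ(z_j)·β)^* + (B_λ(z_i)·conj(B_λ(z_j))/(1 − z_i·conj(z_j)))·I_m is positive definite. (This is the positive definiteness of the element Ψ of the universal Pythagorean algebra evaluated in any finite-dimensional representation.) -/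
open Complex Matrix
open scoped ComplexOrder

/-- The function `f_λ(z) = (√(1-|λ|²)/|λ|) (1/(1 - conj(λ) z) - 1)`. -/
noncomputable def flam (lam z : ℂ) : ℂ :=
  ((Real.sqrt (1 - ‖lam‖ ^ 2) / ‖lam‖ : ℝ) : ℂ) *
    (1 / (1 - (starRingEnd ℂ) lam * z) - 1)

lemma vand_exists {n : ℕ} {z : Fin n → ℂ} (hinj : Function.Injective z)
    {y : Fin n → ℂ} (hy : y ≠ 0) : ∃ k : ℕ, ∑ i, y i * z i ^ k ≠ 0 := by
  by_contra h
  push_neg at h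
  have hdet : ((Matrix.vandermonde z)ᵀ).det ≠ 0 := by
    rw [Matrix.det_transpose, Matrix.det_vandermonde_ne_zero_iff]
    exact fun i j hij => hinj hij
  have hmv : (Matrix.vandermonde z)ᵀ *ᵥ y = (Matrix.vandermonde z)ᵀ *ᵥ 0 := by
    funext k
    simp only [Matrix.mulVec_zero, Pi.zero_apply]
    simpa [Matrix.mulVec, dotProduct, Matrix.vandermonde, mul_comm] using h k
  exact hy (Matrix.mulVec_injective_iff_isUnit.mpr
    ((Matrix.isUnit_iff_isUnit_det _).mpr (isUnit_iff_ne_zero.mpr hdet)) hmv)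

lemma szego_pos {n : ℕ} {z : Fin n → ℂ} (hz : ∀ i, ‖z i‖ < 1)
    (hinj : Function.Injective z) {w : Fin n → ℂ} (hw : w ≠ 0) :
    0 < ∑ i, ∑ j, (starRingEnd ℂ) (w i) * w j * (1 - z i * (starRingEnd ℂ) (z j))⁻¹ := by
  have hnorm : ∀ i j, ‖z i * (starRingEnd ℂ) (z j)‖ < 1 := by
    intro i j
    rw [norm_mul, RingHomIsometric.norm_map]
    calc ‖z i‖ * ‖z j‖ ≤ ‖z i‖ * 1 :=
          mul_le_mul_of_nonneg_left (le_of_lt (by simpa using hz j))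
            (norm_nonneg _)
      _ = ‖z i‖ := mul_one _
      _ < 1 := by simpa using hz i
  set c : ℕ → ℂ := fun k => ∑ i, (starRingEnd ℂ) (w i) * z i ^ k with hc
  have hpt : ∀ k, c k * (starRingEnd ℂ) (c k) =
      ∑ i, ∑ j, (starRingEnd ℂ) (w i) * w j * (z i * (starRingEnd ℂ) (z j)) ^ k := by
    intro k
    have hconj : (starRingEnd ℂ) (c k) = ∑ j, w j * ((starRingEnd ℂ) (z j)) ^ k := by
      simp only [hc, map_sum, _root_.map_mul, map_pow, Complex.conj_conj]
    rw [hconj, hc, Finset.sum_mul_sum]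
    refine Finset.sum_congr rfl fun i _ => Finset.sum_congr rfl fun j _ => ?_
    rw [mul_pow]
    ring
  have hsum_ij : ∀ i j : Fin n,
      Summable (fun k : ℕ => (starRingEnd ℂ) (w i) * w j * (z i * (starRingEnd ℂ) (z j)) ^ k) :=
    fun i j => (summable_geometric_of_norm_lt_one (hnorm i j)).mul_left _
  have hsum_c : Summable (fun k => c k * (starRingEnd ℂ) (c k)) := by
    have : Summable (fun k : ℕ =>
        ∑ i, ∑ j, (starRingEnd ℂ) (w i) * w j * (z i * (starRingEnd ℂ) (z j)) ^ k) :=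
      summable_sum fun i _ => summable_sum fun j _ => hsum_ij i j
    exact this.congr fun k => (hpt k).symm
  have heq : ∑ i, ∑ j, (starRingEnd ℂ) (w i) * w j * (1 - z i * (starRingEnd ℂ) (z j))⁻¹
      = ∑' k, c k * (starRingEnd ℂ) (c k) := by
    have : ∀ i j : Fin n, (starRingEnd ℂ) (w i) * w j * (1 - z i * (starRingEnd ℂ) (z j))⁻¹
        = ∑' k : ℕ, (starRingEnd ℂ) (w i) * w j * (z i * (starRingEnd ℂ) (z j)) ^ k := by
      intro i j
      rw [← tsum_geometric_of_norm_lt_one (hnorm i j), tsum_mul_left]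
    simp only [this]
    have h1 : ∀ i : Fin n, ∑ j, ∑' k : ℕ,
        (starRingEnd ℂ) (w i) * w j * (z i * (starRingEnd ℂ) (z j)) ^ k
        = ∑' k : ℕ, ∑ j, (starRingEnd ℂ) (w i) * w j * (z i * (starRingEnd ℂ) (z j)) ^ k :=
      fun i => (Summable.tsum_finsetSum (fun j _ => hsum_ij i j)).symm
    simp only [h1]
    rw [← Summable.tsum_finsetSum (fun i (_ : i ∈ Finset.univ) => summable_sum fun j _ => hsum_ij i j)]
    exact tsum_congr fun k => (hpt k).symm
  rw [heq]
  obtain ⟨k₀, hk₀⟩ := vand_exists hinj (y := fun i => (starRingEnd ℂ) (w i))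
    (fun h => hw (by funext i; simpa using congrFun h i))
  refine Summable.tsum_pos hsum_c (fun k => ?_) k₀ ?_
  · rw [Complex.mul_conj]
    exact_mod_cast Complex.normSq_nonneg _
  · rw [Complex.mul_conj]
    exact_mod_cast Complex.normSq_pos.mpr hk₀

lemma one_sub_mul_ne {a b : ℂ} (ha : ‖a‖ < 1) (hb : ‖b‖ ≤ 1) :
    1 - a * b ≠ 0 := by
  intro h
  have : a * b = 1 := by linear_combination -h
  have h2 := congrArg norm this
  rw [norm_mul, norm_one] at h2
  nlinarith [norm_nonneg a, norm_nonneg b]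


lemma Blam_ne_zero {lam z : ℂ} (hlam : ‖lam‖ < 1) (hz : ‖z‖ < 1)
    (hz0 : z ≠ 0) (hzl : z ≠ lam) : Blam lam z ≠ 0 := by
  refine div_ne_zero (mul_ne_zero hz0 (sub_ne_zero.mpr hzl)) ?_
  have : ‖(starRingEnd ℂ) lam‖ < 1 := by simpa using hlam
  exact one_sub_mul_ne this hz.le

lemma szegoK_posdef (lam : ℂ) (hlam : ‖lam‖ < 1)
    {n : ℕ} {z : Fin n → ℂ} (hz : ∀ i, ‖z i‖ < 1)
    (hz0 : ∀ i, z i ≠ 0) (hzl : ∀ i, z i ≠ lam) (hinj : Function.Injective z) :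
    (Matrix.of fun i j => Blam lam (z i) * (starRingEnd ℂ) (Blam lam (z j)) /
      (1 - z i * (starRingEnd ℂ) (z j))).PosDef := by
  refine Matrix.posDef_iff_dotProduct_mulVec.mpr ⟨?_, ?_⟩
  · ext i j
    simp only [conjTranspose_apply, Matrix.of_apply, star_def, map_div₀, _root_.map_mul,
      map_sub, Complex.conj_conj, RingHom.map_one]
    ring_nf
  · intro x hx
    have key : star x ⬝ᵥ (Matrix.of fun i j => Blam lam (z i) * (starRingEnd ℂ) (Blam lam (z j)) /
        (1 - z i * (starRingEnd ℂ) (z j))) *ᵥ x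
        = ∑ i, ∑ j, (starRingEnd ℂ) ((starRingEnd ℂ) (Blam lam (z i)) * x i) *
            ((starRingEnd ℂ) (Blam lam (z j)) * x j) *
            (1 - z i * (starRingEnd ℂ) (z j))⁻¹ := by
      simp only [dotProduct, mulVec, Pi.star_apply, Matrix.of_apply, star_def,
        _root_.map_mul, Complex.conj_conj, Finset.mul_sum]
      refine Finset.sum_congr rfl fun i _ => Finset.sum_congr rfl fun j _ => ?_
      rw [div_eq_mul_inv]
      ring
    rw [key]
    refine szego_pos hz hinj (w := fun i => (starRingEnd ℂ) (Blam lam (z i)) * x i) ?_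
    obtain ⟨i, hi⟩ := Function.ne_iff.mp hx
    refine Function.ne_iff.mpr ⟨i, ?_⟩
    have hB : (starRingEnd ℂ) (Blam lam (z i)) ≠ 0 := by
      simpa using Blam_ne_zero hlam (hz i) (hz0 i) (hzl i)
    simpa using mul_ne_zero hB hi

lemma kron_one_posdef {n m : ℕ} {K : Matrix (Fin n) (Fin n) ℂ} (hK : K.PosDef) :
    (Matrix.of fun p q : Fin n × Fin m =>
      K p.1 q.1 * (1 : Matrix (Fin m) (Fin m) ℂ) p.2 q.2).PosDef := by
  refine Matrix.posDef_iff_dotProduct_mulVec.mpr ⟨?_, ?_⟩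
  · ext p q
    have h1 : (starRingEnd ℂ) (K q.1 p.1) = K p.1 q.1 := congrFun (congrFun hK.1 p.1) q.1
    simp only [conjTranspose_apply, Matrix.of_apply, star_def, _root_.map_mul, Matrix.one_apply,
      apply_ite (starRingEnd ℂ), RingHom.map_one, map_zero, h1]
    by_cases h : p.2 = q.2 <;> simp [h, eq_comm]
  · intro x hx
    have key : star x ⬝ᵥ (Matrix.of fun p q : Fin n × Fin m =>
        K p.1 q.1 * (1 : Matrix (Fin m) (Fin m) ℂ) p.2 q.2) *ᵥ x
        = ∑ r : Fin m, star (fun i => x (i, r)) ⬝ᵥ K *ᵥ (fun i => x (i, r)) := by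
      simp only [dotProduct, mulVec, Pi.star_apply, Matrix.of_apply, Matrix.one_apply,
        Fintype.sum_prod_type, mul_ite, mul_one, mul_zero, ite_mul, zero_mul,
        Finset.sum_ite_eq, Finset.sum_ite_eq', Finset.mem_univ, if_true]
      exact Finset.sum_comm
    rw [key]
    obtain ⟨⟨i₀, r₀⟩, hp⟩ := Function.ne_iff.mp hx
    refine Finset.sum_pos' (fun r _ => hK.posSemidef.dotProduct_mulVec_nonneg _) ⟨r₀, Finset.mem_univ _, ?_⟩
    exact hK.dotProduct_mulVec_pos (Function.ne_iff.mpr ⟨i₀, by simpa using hp⟩)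

/-- positive definiteness of the element `Ψ` in every finite-dimensional
representation: the `nm × nm` block matrix with `(i,j)` block
`(α + f_λ(z_i) β)(α + f_λ(z_j) β)* + (B_λ(z_i) conj(B_λ(z_j))/(1 − z_i conj(z_j))) I_m`
is positive definite, for arbitrary `α, β ∈ M_m(ℂ)`. -/
theorem stmt10 (lam : ℂ) (hlam : ‖lam‖ < 1) (hlam0 : lam ≠ 0)
    (n : ℕ) (z : Fin n → ℂ)
    (hz : ∀ i, ‖z i‖ < 1)
    (hz0 : ∀ i, z i ≠ 0) (hzl : ∀ i, z i ≠ lam)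
    (hzinj : Function.Injective z)
    (m : ℕ) (hm : 1 ≤ m) (α β : Matrix (Fin m) (Fin m) ℂ) :
    (Matrix.of fun p q : Fin n × Fin m =>
      ((α + flam lam (z p.1) • β) * (α + flam lam (z q.1) • β)ᴴ +
        (Blam lam (z p.1) * (starRingEnd ℂ) (Blam lam (z q.1)) /
          (1 - z p.1 * (starRingEnd ℂ) (z q.1))) • (1 : Matrix (Fin m) (Fin m) ℂ))
        p.2 q.2).PosDef := by

  have hK := szegoK_posdef lam hlam hz hz0 hzl hzinj
  have hS := kron_one_posdef (m := m) hK
  have hEq : (Matrix.of fun p q : Fin n × Fin m =>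
      ((α + flam lam (z p.1) • β) * (α + flam lam (z q.1) • β)ᴴ +
        (Blam lam (z p.1) * (starRingEnd ℂ) (Blam lam (z q.1)) /
          (1 - z p.1 * (starRingEnd ℂ) (z q.1))) • (1 : Matrix (Fin m) (Fin m) ℂ))
        p.2 q.2)
      = (Matrix.of fun (p : Fin n × Fin m) (t : Fin m) => (α + flam lam (z p.1) • β) p.2 t) *
          (Matrix.of fun (p : Fin n × Fin m) (t : Fin m) => (α + flam lam (z p.1) • β) p.2 t)ᴴ
        + (Matrix.of fun p q : Fin n × Fin m =>
            (Matrix.of fun i j => Blam lam (z i) * (starRingEnd ℂ) (Blam lam (z j)) /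
              (1 - z i * (starRingEnd ℂ) (z j))) p.1 q.1 *
            (1 : Matrix (Fin m) (Fin m) ℂ) p.2 q.2) := by
    ext p q
    simp only [Matrix.of_apply, Matrix.add_apply, Matrix.mul_apply, Matrix.conjTranspose_apply,
      Matrix.smul_apply, smul_eq_mul, star_def]
  rw [hEq]
  exact Matrix.PosDef.posSemidef_add (Matrix.posSemidef_self_mul_conjTranspose _) hS
end

section
/- Let n ≥ 1 and let G ∈ M_n(ℂ) be a positive definite matrix such that every entry of its first row is nonzero (G_{1j} ≠ 0 for all j). Let G^{1/2} denote the (unique) positive definite square root of G, and for 1 ≤ i ≤ n set A_i = (G^{1/2})⁻¹ · E_{ii} · G^{1/2}, where E_{ii} is the matrix unit with a single 1 in position (i, i). Then the smallest unital star-subalgebra of M_n(ℂ) containing A₁, …, A_n is all of M_n(ℂ). -/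
open Matrix
open scoped ComplexOrder

private lemma std_sandwich {n : ℕ} (i j k l : Fin n) (X : Matrix (Fin n) (Fin n) ℂ) :
    single i j (1:ℂ) * X * single k l (1:ℂ)
      = single i l (X j k) := by
  ext a b
  rcases eq_or_ne i a with rfl | ha
  · rcases eq_or_ne l b with rfl | hb
    · simp
    · rw [Matrix.mul_single_apply_of_ne _ _ _ _ _ (Ne.symm hb)]
      simp [hb]
  · rw [mul_assoc, Matrix.single_mul_apply_of_ne _ _ _ _ _ (Ne.symm ha)]
    simp [ha]

private lemma std_conjT {n : ℕ} (i : Fin n) :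
    (single i i (1:ℂ))ᴴ = single i i 1 := by
  ext a b
  rcases eq_or_ne i a with rfl | ha
  · rcases eq_or_ne i b with rfl | hb
    · simp
    · simp [Matrix.conjTranspose_apply, hb]
  · simp [Matrix.conjTranspose_apply, ha, Ne.symm ha]

/-- if `G` is positive definite with all entries of its first row nonzero, and
`A_i = G^{-1/2} E_{ii} G^{1/2}`, then the unital star-subalgebra of `M_n(ℂ)` generated by the
`A_i` is all of `M_n(ℂ)`. -/
theorem stmt13 (n : ℕ) (hn : 1 ≤ n) (G : Matrix (Fin n) (Fin n) ℂ) (hG : G.PosDef)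
    (hrow : ∀ j : Fin n, G ⟨0, hn⟩ j ≠ 0)
    (A : Fin n → Matrix (Fin n) (Fin n) ℂ)
    (hA : ∀ i, A i = ((hG.posSemidef.1.eigenvectorUnitary : Matrix (Fin n) (Fin n) ℂ) *
        diagonal (((↑) ∘ Real.sqrt ∘ hG.posSemidef.1.eigenvalues : Fin n → ℂ)) *
        (star hG.posSemidef.1.eigenvectorUnitary : Matrix (Fin n) (Fin n) ℂ))⁻¹ *
      Matrix.single i i (1 : ℂ) * ((hG.posSemidef.1.eigenvectorUnitary : Matrix (Fin n) (Fin n) ℂ) *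
        diagonal (((↑) ∘ Real.sqrt ∘ hG.posSemidef.1.eigenvalues : Fin n → ℂ)) *
        (star hG.posSemidef.1.eigenvectorUnitary : Matrix (Fin n) (Fin n) ℂ))) :
    StarAlgebra.adjoin ℂ (Set.range A) = ⊤ := by
  set z : Fin n := ⟨0, hn⟩ with hz
  set S : Matrix (Fin n) (Fin n) ℂ := (hG.posSemidef.1.eigenvectorUnitary : Matrix (Fin n) (Fin n) ℂ) *
        diagonal (((↑) ∘ Real.sqrt ∘ hG.posSemidef.1.eigenvalues : Fin n → ℂ)) *
        (star hG.posSemidef.1.eigenvectorUnitary : Matrix (Fin n) (Fin n) ℂ) with hSdef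
  clear_value S
  have hSherm : Sᴴ = S := by
    have hD : star (diagonal (((↑) ∘ Real.sqrt ∘ hG.posSemidef.1.eigenvalues : Fin n → ℂ)))
        = diagonal (((↑) ∘ Real.sqrt ∘ hG.posSemidef.1.eigenvalues : Fin n → ℂ)) := by
      rw [Matrix.star_eq_conjTranspose, Matrix.diagonal_conjTranspose]
      congr 1
      funext k
      simp
    rw [hSdef]
    simp only [Matrix.conjTranspose_mul, Matrix.mul_assoc,
      ← Matrix.star_eq_conjTranspose, star_mul, star_star, hD]
  have hSS : S * S = G := by
    have hU := Matrix.UnitaryGroup.star_mul_self hG.posSemidef.1.eigenvectorUnitary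
    have hd : diagonal (((↑) ∘ Real.sqrt ∘ hG.posSemidef.1.eigenvalues : Fin n → ℂ)) *
        diagonal (((↑) ∘ Real.sqrt ∘ hG.posSemidef.1.eigenvalues : Fin n → ℂ))
        = diagonal (RCLike.ofReal ∘ hG.posSemidef.1.eigenvalues) := by
      rw [diagonal_mul_diagonal]
      congr 1
      funext k
      simp only [Function.comp_apply]
      rw [← Complex.ofReal_mul, Real.mul_self_sqrt (hG.posSemidef.eigenvalues_nonneg k)]
      rfl
    conv_rhs => rw [hG.posSemidef.1.spectral_theorem, Unitary.conjStarAlgAut_apply]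
    rw [hSdef, ← hd]
    simp only [Matrix.mul_assoc]
    rw [← Matrix.mul_assoc (star (hG.posSemidef.1.eigenvectorUnitary : Matrix (Fin n) (Fin n) ℂ)), hU, Matrix.one_mul]
  have hdet : IsUnit S.det := by
    rw [isUnit_iff_ne_zero]
    intro h
    have : G.det = 0 := by rw [← hSS, det_mul, h, mul_zero]
    exact hG.det_pos.ne' this
  have hinv : S⁻¹ * S = 1 := nonsing_inv_mul S hdet
  have hinv' : S * S⁻¹ = 1 := mul_nonsing_inv S hdet
  have hstarS : star S = S := hSherm
  have hstarSi : star S⁻¹ = S⁻¹ := by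
    rw [Matrix.star_eq_conjTranspose, Matrix.conjTranspose_nonsing_inv, hSherm]
  have hGinv : S⁻¹ * S⁻¹ = G⁻¹ := by rw [← hSS, Matrix.mul_inv_rev]
  set T := StarAlgebra.adjoin ℂ (Set.range A) with hT
  have hmemA : ∀ i, A i ∈ T := fun i =>
    StarAlgebra.subset_adjoin ℂ _ (Set.mem_range_self i)
  -- B i j := S⁻¹ * E i j * S⁻¹
  have h1 : ∀ i j : Fin n,
      (G i j) • (S⁻¹ * single i j (1:ℂ) * S⁻¹) ∈ T := by
    intro i j
    have hst : star (A j) = S * single j j (1:ℂ) * S⁻¹ := by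
      rw [hA j, Matrix.star_eq_conjTranspose, Matrix.conjTranspose_mul,
        Matrix.conjTranspose_mul, std_conjT, ← Matrix.star_eq_conjTranspose,
        ← Matrix.star_eq_conjTranspose, hstarS, hstarSi, mul_assoc]
    have heq : A i * star (A j)
        = (G i j) • (S⁻¹ * single i j (1:ℂ) * S⁻¹) := by
      rw [hA i, hst]
      have : (S⁻¹ * single i i (1:ℂ) * S) * (S * single j j (1:ℂ) * S⁻¹)
          = S⁻¹ * (single i i (1:ℂ) * G * single j j (1:ℂ)) * S⁻¹ := by
        rw [← hSS]; ring_nf; noncomm_ring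
      rw [this, std_sandwich,
        show single i j (G i j) = G i j • single i j (1:ℂ) by simp,
        mul_smul_comm, smul_mul_assoc]
    rw [← heq]
    exact mul_mem (hmemA i) (star_mem (hmemA j))
  have hB0 : ∀ j : Fin n, (S⁻¹ * single z j (1:ℂ) * S⁻¹) ∈ T := by
    intro j
    have := SMulMemClass.smul_mem (G z j)⁻¹ (h1 z j)
    rwa [inv_smul_smul₀ (hrow j)] at this
  have hBz : ∀ i : Fin n, (S⁻¹ * single i z (1:ℂ) * S⁻¹) ∈ T := by
    intro i
    have hne : G i z ≠ 0 := by
      have h' : star (G z i) = G i z := by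
        rw [← Matrix.conjTranspose_apply]
        exact congrFun (congrFun hG.isHermitian i) z
      rw [← h']
      exact star_ne_zero.mpr (hrow i)
    have := SMulMemClass.smul_mem (G i z)⁻¹ (h1 i z)
    rwa [inv_smul_smul₀ hne] at this
  have hGzz : G⁻¹ z z ≠ 0 := by
    have hsne : (Pi.single z 1 : Fin n → ℂ) ≠ 0 := by
      intro h
      have h2 := congrFun h z
      rw [Pi.single_eq_same, Pi.zero_apply] at h2
      exact one_ne_zero h2
    have hpos := hG.inv.dotProduct_mulVec_pos hsne
    have : G⁻¹ z z = star (Pi.single z (1:ℂ)) ⬝ᵥ G⁻¹ *ᵥ Pi.single z 1 := by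
      simp [dotProduct, Matrix.mulVec, Pi.single_apply]
    rw [this]
    exact hpos.ne'
  have hBij : ∀ i j : Fin n, (S⁻¹ * single i j (1:ℂ) * S⁻¹) ∈ T := by
    intro i j
    have heq : (S⁻¹ * single i z (1:ℂ) * S⁻¹) * (S⁻¹ * single z j (1:ℂ) * S⁻¹)
        = (G⁻¹ z z) • (S⁻¹ * single i j (1:ℂ) * S⁻¹) := by
      have : (S⁻¹ * single i z (1:ℂ) * S⁻¹) * (S⁻¹ * single z j (1:ℂ) * S⁻¹)
          = S⁻¹ * (single i z (1:ℂ) * G⁻¹ * single z j (1:ℂ)) * S⁻¹ := by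
        rw [← hGinv]; noncomm_ring
      rw [this, std_sandwich,
        show single i j (G⁻¹ z z) = G⁻¹ z z • single i j (1:ℂ) by simp,
        mul_smul_comm, smul_mul_assoc]
    have hm : (G⁻¹ z z) • (S⁻¹ * single i j (1:ℂ) * S⁻¹) ∈ T := by
      rw [← heq]; exact mul_mem (hBz i) (hB0 j)
    have := SMulMemClass.smul_mem (G⁻¹ z z)⁻¹ hm
    rwa [inv_smul_smul₀ hGzz] at this
  rw [eq_top_iff]
  intro M _
  have hrepr : M = ∑ i : Fin n, ∑ j : Fin n,
      ((S * M * S) i j) • (S⁻¹ * single i j (1:ℂ) * S⁻¹) := by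
    have : ∀ i j : Fin n, ((S * M * S) i j) • (S⁻¹ * single i j (1:ℂ) * S⁻¹)
        = S⁻¹ * single i j ((S * M * S) i j) * S⁻¹ := by
      intro i j
      rw [← Matrix.smul_mul, ← Matrix.mul_smul, smul_single, smul_eq_mul, mul_one]
    calc M = S⁻¹ * (S * M * S) * S⁻¹ := by
            rw [← mul_assoc, ← mul_assoc, hinv, one_mul, mul_assoc, hinv', mul_one]
      _ = S⁻¹ * (∑ i : Fin n, ∑ j : Fin n, single i j ((S * M * S) i j)) * S⁻¹ := by
            rw [← matrix_eq_sum_single]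
      _ = ∑ i : Fin n, ∑ j : Fin n, S⁻¹ * single i j ((S * M * S) i j) * S⁻¹ := by
            rw [Matrix.mul_sum, Matrix.sum_mul]
            refine Finset.sum_congr rfl fun i _ => ?_
            rw [Matrix.mul_sum, Matrix.sum_mul]
      _ = ∑ i : Fin n, ∑ j : Fin n,
            ((S * M * S) i j) • (S⁻¹ * single i j (1:ℂ) * S⁻¹) :=
            Finset.sum_congr rfl fun i _ => Finset.sum_congr rfl fun j _ => (this i j).symm
  rw [hrepr]
  exact sum_mem fun i _ => sum_mem fun j _ => SMulMemClass.smul_mem _ (hBij i j)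
end

section
/- Let λ = 1/√2, z₁ = 4/(3√2), z₂ = 1/(2√2), z₃ = √2/3, z₄ = −1/√2, and ω = √2 − 1. Then the Blaschke products B_{z₁,z₂,ω} and B_{z₃,z₄,ω} both satisfy the node constraint: B_{z₁,z₂,ω}(0) = B_{z₁,z₂,ω}(λ) and B_{z₃,z₄,ω}(0) = B_{z₃,z₄,ω}(λ). -/
/-- The real degree-three Blaschke product with zeroes `a, b, c`. -/
noncomputable def B3R (a b c z : ℝ) : ℝ :=
  ((z - a) / (1 - a * z)) * ((z - b) / (1 - b * z)) * ((z - c) / (1 - c * z))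

/-- with `λ = 1/√2`, `z₁ = 4/(3√2)`, `z₂ = 1/(2√2)`, `z₃ = √2/3`, `z₄ = −1/√2`
and `ω = √2 − 1`, both `B_{z₁,z₂,ω}` and `B_{z₃,z₄,ω}` satisfy the node constraint
`f(0) = f(λ)`. -/
theorem stmt15 :
    B3R (4 / (3 * Real.sqrt 2)) (1 / (2 * Real.sqrt 2)) (Real.sqrt 2 - 1) 0 =
      B3R (4 / (3 * Real.sqrt 2)) (1 / (2 * Real.sqrt 2)) (Real.sqrt 2 - 1)
        (1 / Real.sqrt 2) ∧
    B3R (Real.sqrt 2 / 3) (-(1 / Real.sqrt 2)) (Real.sqrt 2 - 1) 0 =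
      B3R (Real.sqrt 2 / 3) (-(1 / Real.sqrt 2)) (Real.sqrt 2 - 1)
        (1 / Real.sqrt 2) := by
  have hs : Real.sqrt 2 * Real.sqrt 2 = 2 := Real.mul_self_sqrt (by norm_num)
  have hs1 : (1:ℝ) < Real.sqrt 2 := by nlinarith [Real.sqrt_nonneg 2]
  set s := Real.sqrt 2 with hsdef
  have hs0 : s ≠ 0 := by positivity
  have e1 : 3 * s * s - 4 = 2 := by nlinarith
  have e2 : 2 * s * s - 1 = 3 := by nlinarith
  have e3 : 1 - s * (s - 1) = s - 1 := by nlinarith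
  have e4 : s - 1 ≠ 0 := by nlinarith
  have e5 : 3 * s - s ≠ 0 := by nlinarith
  have e6 : s * s + 1 = 3 := by nlinarith
  have p2 : s ^ 2 = 2 := by nlinarith
  have p3 : s ^ 3 = 2 * s := by rw [show s ^ 3 = s ^ 2 * s by ring, p2]
  have p4 : s ^ 4 = 4 := by rw [show s ^ 4 = s ^ 2 * s ^ 2 by ring, p2]; norm_num
  have p5 : s ^ 5 = 4 * s := by rw [show s ^ 5 = s ^ 4 * s by ring, p4]
  have p6 : s ^ 6 = 8 := by rw [show s ^ 6 = s ^ 4 * s ^ 2 by ring, p4, p2]; norm_num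
  have p7 : s ^ 7 = 8 * s := by rw [show s ^ 7 = s ^ 6 * s by ring, p6]
  constructor <;>
    (unfold B3R; field_simp [e1, e2, e3, e4, e5, e6]; ring_nf
     simp only [p7, p6, p5, p4, p3, p2]; ring_nf)
  rw [mul_inv_cancel₀ hs0]
  have hi2 : s⁻¹ = s / 2 := by field_simp; nlinarith [hs]
  rw [hi2]; ring
end

section
/- There are no real numbers x ≠ y satisfying simultaneously the two equalities: (3x²+14x+5)²·(8y²+4y+5)·(9y²+42y+65) = (3y²+14y+5)²·(8x²+4x+5)·(9x²+42x+65) and (6x²+25x+31)²·(9y²+42y+65)·(8y²+28y+29) = (6y²+25y+31)²·(9x²+42x+65)·(8x²+28x+29). (Equivalently, since 8t²+4t+5, 9t²+42t+65 and 8t²+28t+29 are strictly positive for all real t, for x ≠ y the two normalized kernel-modulus ratios (3x²+14x+5)²/((8x²+4x+5)(9x²+42x+65)) and (6x²+25x+31)²/((9x²+42x+65)(8x²+28x+29)) cannot both take the same values at x and at y.) -/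
set_option maxHeartbeats 2000000

/-- no two distinct real numbers `x ≠ y` satisfy simultaneously the two
kernel-modulus coincidence equations from the unitary-inequivalence analysis. -/
theorem stmt19 (x y : ℝ) (hxy : x ≠ y) :
    ¬((3 * x ^ 2 + 14 * x + 5) ^ 2 * (8 * y ^ 2 + 4 * y + 5) * (9 * y ^ 2 + 42 * y + 65) =
        (3 * y ^ 2 + 14 * y + 5) ^ 2 * (8 * x ^ 2 + 4 * x + 5) * (9 * x ^ 2 + 42 * x + 65) ∧
      (6 * x ^ 2 + 25 * x + 31) ^ 2 * (9 * y ^ 2 + 42 * y + 65) * (8 * y ^ 2 + 28 * y + 29) =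
        (6 * y ^ 2 + 25 * y + 31) ^ 2 * (9 * x ^ 2 + 42 * x + 65) *
          (8 * x ^ 2 + 28 * x + 29)) := by
  rintro ⟨h1, h2⟩
  have hxy' : x - y ≠ 0 := sub_ne_zero.mpr hxy
  have hG1 : (150 + 245*x + 80*x^2 + 5*x^3 + 245*y + 96*x*y - 51*x^2*y - 26*x^3*y
      + 80*y^2 - 51*x*y^2 - 126*x^2*y^2 - 43*x^3*y^2
      + 5*y^3 - 26*x*y^3 - 43*x^2*y^3 - 12*x^3*y^3 : ℝ) = 0 := by
    have h : (x - y) * (150 + 245*x + 80*x^2 + 5*x^3 + 245*y + 96*x*y - 51*x^2*y - 26*x^3*y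
        + 80*y^2 - 51*x*y^2 - 126*x^2*y^2 - 43*x^3*y^2
        + 5*y^3 - 26*x*y^3 - 43*x^2*y^3 - 12*x^3*y^3 : ℝ) = 0 := by
      linear_combination ((1:ℝ)/225) * h1
    exact (mul_eq_zero.mp h).resolve_left hxy'
  have hG2 : (186 - 111*x + 36*x^2 - 111*x^3 - 111*y - 336*x*y - 111*x^2*y - 186*x^3*y
      + 36*y^2 - 111*x*y^2 - 114*x^2*y^2 - 111*x^3*y^2
      - 111*y^3 - 186*x*y^3 - 111*x^2*y^3 - 36*x^3*y^3 : ℝ) = 0 := by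
    have h : (x - y) * (186 - 111*x + 36*x^2 - 111*x^3 - 111*y - 336*x*y - 111*x^2*y - 186*x^3*y
        + 36*y^2 - 111*x*y^2 - 114*x^2*y^2 - 111*x^3*y^2
        - 111*y^3 - 186*x*y^3 - 111*x^2*y^3 - 36*x^3*y^3 : ℝ) = 0 := by
      linear_combination ((1:ℝ)/12) * h2
    exact (mul_eq_zero.mp h).resolve_left hxy'
  have key : (x + 1) * ((x^2+1)^2 * (x^2+4*x+5) * (9*x^2+42*x+65)
      * (3*x^4+12*x^3+43*x^2+62*x+40) * (96*x^4+398*x^3+606*x^2+423*x+335)) = 0 := by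
    linear_combination ((1490677/192) + (-3149957/384)*y^1 + (3652603/384)*y^2 + (137274737/1920)*x^1 + (-26767687/640)*x^1*y^1 + (48546907/960)*x^1*y^2 + (1103825147/4800)*x^2 + (-1026048047/9600)*x^2*y^1 + (409478391/3200)*x^2*y^2 + (1487159991/3200)*x^3 + (-571715389/3200)*x^3*y^1 + (175068841/800)*x^3*y^2 + (36585733/50)*x^4 + (-85185333/400)*x^4*y^1 + (48949993/160)*x^4*y^2 + (38148827/40)*x^5 + (-145112643/800)*x^5*y^1 + (304556191/800)*x^5*y^2 + (825038341/800)*x^6 + (-152437837/1600)*x^6*y^1 + (664587291/1600)*x^6*y^2 + (1469862863/1600)*x^7 + (-1600049/1600)*x^7*y^1 + (37908891/100)*x^7*y^2 + (1071515759/1600)*x^8 + (178020089/3200)*x^8*y^1 + (179640109/640)*x^8*y^2 + (3781695509/9600)*x^9 + (612117319/9600)*x^9*y^1 + (798200063/4800)*x^9*y^2 + (176423251/960)*x^10 + (142365431/3200)*x^10*y^1 + (749792809/9600)*x^10*y^2 + (644485249/9600)*x^11 + (214287661/9600)*x^11*y^1 + (22942531/800)*x^11*y^2 + (3028381/160)*x^12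 + (526319/64)*x^12*y^1 + (2561777/320)*x^12*y^2 + (6375721/1600)*x^13 + (3426817/1600)*x^13*y^1 + (322419/200)*x^13*y^2 + (113523/200)*x^14 + (141249/400)*x^14*y^1 + (42039/200)*x^14*y^2 + (333/8)*x^15 + (225/8)*x^15*y^1 + (27/2)*x^15*y^2 : ℝ) * hG1 + ((1097775/64) + (7631935/1152)*y^1 + (493595/1152)*y^2 + (75434005/1152)*x^1 + (23463119/1152)*x^1*y^1 + (-384821/576)*x^1*y^2 + (73697737/576)*x^2 + (131810281/5760)*x^2*y^1 + (-5807927/640)*x^2*y^2 + (126901673/640)*x^3 + (117866011/9600)*x^3*y^1 + (-59995897/2400)*x^3*y^2 + (33416833/120)*x^4 + (1921523/400)*x^4*y^1 + (-99204467/2400)*x^4*y^2 + (6463053/20)*x^5 + (-9193349/800)*x^5*y^1 + (-134195449/2400)*x^5*y^2 + (27161831/96)*x^6 + (-54046709/960)*x^6*y^1 + (-111196999/1600)*x^6*y^2 + (177086243/960)*x^7 + (-501653513/4800)*x^7*y^1 + (-14998173/200)*x^7*y^2 + (17941357/192)*x^8 + (-221215999/1920)*x^8*y^1 + (-623262719/9600)*x^8*y^2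 + (76526723/1920)*x^9 + (-2497168409/28800)*x^9*y^1 + (-629191157/14400)*x^9*y^2 + (44118649/2880)*x^10 + (-1369467823/28800)*x^10*y^1 + (-653449831/28800)*x^10*y^2 + (5996057/1152)*x^11 + (-112440911/5760)*x^11*y^1 + (-21592327/2400)*x^11*y^2 + (678763/480)*x^12 + (-9527247/1600)*x^12*y^1 + (-12742219/4800)*x^12*y^2 + (262357/960)*x^13 + (-6178567/4800)*x^13*y^1 + (-13799/25)*x^13*y^2 + (1313/40)*x^14 + (-70621/400)*x^14*y^1 + (-14463/200)*x^14*y^2 + (15/8)*x^15 + (-93/8)*x^15*y^1 + (-9/2)*x^15*y^2 : ℝ) * hG2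
  have hP : (0:ℝ) < (x^2+1)^2 * (x^2+4*x+5) * (9*x^2+42*x+65)
      * (3*x^4+12*x^3+43*x^2+62*x+40) * (96*x^4+398*x^3+606*x^2+423*x+335) := by
    have h1' : (0:ℝ) < (x^2+1)^2 := by positivity
    have h2' : (0:ℝ) < x^2+4*x+5 := by nlinarith [sq_nonneg (x+2)]
    have h3' : (0:ℝ) < 9*x^2+42*x+65 := by nlinarith [sq_nonneg (3*x+7)]
    have h4' : (0:ℝ) < 3*x^4+12*x^3+43*x^2+62*x+40 := by
      nlinarith [sq_nonneg (x+1), sq_nonneg (x^2+2*x), sq_nonneg (x^2+2*x+1)]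
    have h5' : (0:ℝ) < 96*x^4+398*x^3+606*x^2+423*x+335 := by
      nlinarith [sq_nonneg (96*x^2+199*x), sq_nonneg (18575*x+20304), sq_nonneg x]
    positivity
  have hx : x = -1 := by
    have := (mul_eq_zero.mp key).resolve_right (ne_of_gt hP)
    linarith
  subst hx
  nlinarith [sq_nonneg (24*y+25), hG2, sq_nonneg y]
end
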